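/- For all nonnegative integers m and n, the following identity holds in the polynomial ring ℤ[z₁,z₂]: ∑_{i=0}^{n} (-1)^i C(m+i,i) [ ∑_{j=0}^{n-i} C(m+i+j, j) ( ∑_{l=0}^{i} C(i,l) z₂^{j+l} ) z₁^{n-j-i} − z₁^{n-i} ] = 0. -/

import Mathlib

open Finset MvPolynomial

lemma tri {M : Type*} [AddCommMonoid M] (f : ℕ → ℕ → M) (n : ℕ) :
    ∑ i ∈ range (n + 1), ∑ j ∈ range (n - i + 1), f i j
      = ∑ k ∈ range (n + 1), ∑ i ∈ range (k + 1), f i (k - i) := by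
  induction n with
  | zero => simp
  | succ n ih =>
    have h1 : ∀ i ∈ range (n + 1), ∑ j ∈ range (n + 1 - i + 1), f i j
        = ∑ j ∈ range (n - i + 1), f i j + f i (n - i + 1) := by
      intro i hi
      rw [mem_range] at hi
      have h : n + 1 - i = n - i + 1 := by omega
      rw [h, sum_range_succ]
    rw [sum_range_succ (fun i => ∑ j ∈ range (n + 1 - i + 1), f i j) (n + 1),
        sum_congr rfl h1, sum_add_distrib, ih,
        sum_range_succ (fun k => ∑ i ∈ range (k + 1), f i (k - i)) (n + 1),
        sum_range_succ (fun i => f i (n + 1 - i)) (n + 1)]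
    have h2 : ∑ i ∈ range (n + 1), f i (n - i + 1)
        = ∑ i ∈ range (n + 1), f i (n + 1 - i) := by
      refine sum_congr rfl fun i hi => ?_
      rw [mem_range] at hi
      congr 1
      omega
    rw [h2]
    simp [add_assoc]

lemma cc {m k i : ℕ} (h : i ≤ k) :
    (m + i).choose i * (m + k).choose (k - i) = (m + k).choose k * k.choose i := by
  have h1 := Nat.choose_mul (n := m + k) (show m ≤ m + i by omega)
  have e1 : (m + k).choose (m + i) = (m + k).choose (k - i) := by
    rw [← Nat.choose_symm (by omega : m + i ≤ m + k)]
    congr 1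
    omega
  have e2 : (m + i).choose m = (m + i).choose i := by
    rw [← Nat.choose_symm (by omega : i ≤ m + i)]
    congr 1
    omega
  have e3 : (m + k).choose m = (m + k).choose k := by
    rw [← Nat.choose_symm (by omega : k ≤ m + k)]
    congr 1
    omega
  rw [e1, e2, e3] at h1
  have e4 : m + i - m = i := by omega
  rw [e4] at h1
  simpa [mul_comm] using h1

lemma key {R : Type*} [CommRing R] (y : R) (m k : ℕ) :
    ∑ i ∈ range (k + 1),
      (-1 : R) ^ i * ((m + i).choose i : R) * ((m + k).choose (k - i) : R) *
        (y ^ (k - i) * (y + 1) ^ i)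
      = (-1 : R) ^ k * ((m + k).choose k : R) := by
  calc ∑ i ∈ range (k + 1),
      (-1 : R) ^ i * ((m + i).choose i : R) * ((m + k).choose (k - i) : R) *
        (y ^ (k - i) * (y + 1) ^ i)
      = ∑ i ∈ range (k + 1),
        ((m + k).choose k : R) * ((-1 : R) ^ i * (y + 1) ^ i * y ^ (k - i) * (k.choose i : R)) := by
        refine sum_congr rfl fun i hi => ?_
        rw [mem_range] at hi
        have hik : i ≤ k := by omega
        have hc : ((m + i).choose i : R) * ((m + k).choose (k - i) : R)
            = ((m + k).choose k : R) * (k.choose i : R) := by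
          have := cc (m := m) hik
          exact_mod_cast congrArg (fun t : ℕ => (t : R)) this
        linear_combination ((-1 : R) ^ i * y ^ (k - i) * (y + 1) ^ i) * hc
    _ = ∑ i ∈ range (k + 1),
        ((m + k).choose k : R) * ((-(y + 1)) ^ i * y ^ (k - i) * (k.choose i : R)) := by
        refine sum_congr rfl fun i _ => ?_
        rw [neg_pow (y + 1) i]
    _ = ((m + k).choose k : R) * (-(y + 1) + y) ^ k := by rw [← mul_sum, ← add_pow]
    _ = (-1 : R) ^ k * ((m + k).choose k : R) := by
        have h : -(y + 1) + y = -1 := by ring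
        rw [h]; ring

theorem main {R : Type*} [CommRing R] (x y : R) (m n : ℕ) :
    ∑ i ∈ range (n + 1), (-1 : R) ^ i * ((m + i).choose i : ℤ) •
      ((∑ j ∈ range (n - i + 1), ((m + i + j).choose j : ℤ) •
          ((∑ l ∈ range (i + 1), (i.choose l : ℤ) • y ^ (j + l)) * x ^ (n - j - i)))
        - x ^ (n - i)) = 0 := by
  have hin : ∀ i j : ℕ, (∑ l ∈ range (i + 1), ((i.choose l : ℕ) : R) * y ^ (j + l))
      = y ^ j * (y + 1) ^ i := by
    intro i j
    rw [add_pow, mul_sum]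
    refine sum_congr rfl fun l hl => ?_
    simp only [one_pow, pow_add]
    ring
  simp only [zsmul_eq_mul, Int.cast_natCast]
  simp only [hin, mul_sub, sum_sub_distrib]
  rw [sub_eq_zero]
  have lhs_eq : ∑ i ∈ range (n + 1), (-1 : R) ^ i *
      (((m + i).choose i : R) * ∑ j ∈ range (n - i + 1),
        ((m + i + j).choose j : R) * (y ^ j * (y + 1) ^ i * x ^ (n - j - i)))
      = ∑ i ∈ range (n + 1), ∑ j ∈ range (n - i + 1),
        (-1 : R) ^ i * (((m + i).choose i : R) *
          (((m + i + j).choose j : R) * (y ^ j * (y + 1) ^ i * x ^ (n - j - i)))) := by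
    refine sum_congr rfl fun i _ => ?_
    rw [mul_sum, mul_sum]
  rw [lhs_eq, tri]
  refine sum_congr rfl fun k hk => ?_
  rw [mem_range] at hk
  have step : ∀ i ∈ range (k + 1),
      (-1 : R) ^ i * (((m + i).choose i : R) *
        (((m + i + (k - i)).choose (k - i) : R) *
          (y ^ (k - i) * (y + 1) ^ i * x ^ (n - (k - i) - i))))
      = ((-1 : R) ^ i * ((m + i).choose i : R) * ((m + k).choose (k - i) : R) *
          (y ^ (k - i) * (y + 1) ^ i)) * x ^ (n - k) := by
    intro i hi
    rw [mem_range] at hi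
    have h1 : m + i + (k - i) = m + k := by omega
    have h2 : n - (k - i) - i = n - k := by omega
    rw [h1, h2]
    ring
  rw [sum_congr rfl step, ← sum_mul, key]
  ring

theorem stmt1 (m n : ℕ) :
    ∑ i ∈ range (n + 1), (-1 : MvPolynomial (Fin 2) ℤ) ^ i * ((m + i).choose i : ℤ) •
      ((∑ j ∈ range (n - i + 1), ((m + i + j).choose j : ℤ) •
          ((∑ l ∈ range (i + 1), (i.choose l : ℤ) • (X 1 : MvPolynomial (Fin 2) ℤ) ^ (j + l)) *
            (X 0 : MvPolynomial (Fin 2) ℤ) ^ (n - j - i)))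
        - (X 0 : MvPolynomial (Fin 2) ℤ) ^ (n - i)) = 0 :=
  main (X 0) (X 1) m n
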